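/- Fix an integer k ≥ 1 (for k = 1 the hypothesis forces the data to vanish). Let p₁ ∈ ℝ[x,y,z] have degree ≤ k−1 in x, ≤ k−2 in y, ≤ k−2 in z; let p₂ ∈ ℝ[x,y,z] have degree ≤ k−2 in x, ≤ k−1 in y, ≤ k−2 in z; and let ρ ∈ Q^{k−2,k−2}[x,y]. Define u : Ω∞° → ℝ³ by u(x,y,z) = (1+z)^{−(k+1)}·( y(1−y)z·p₁(x,y,z), x(1−x)z·p₂(x,y,z), x(1−x)y(1−y)·ρ(x,y) ). If curl u = 0 at every point of Ω∞°, then p₁ = 0, p₂ = 0 and ρ = 0. In other words, the curl operator is injective on the space U^{(1),k}_{0,curl}(Ω∞) of all functions of this form. -/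

import Mathlib

noncomputable section

/-- The interior `Ω∞° = (0,1) × (0,1) × (0,∞)` of the infinite pyramid. -/
def PyrInfInt : Set (ℝ × ℝ × ℝ) :=
  {p | 0 < p.1 ∧ p.1 < 1 ∧ 0 < p.2.1 ∧ p.2.1 < 1 ∧ 0 < p.2.2}

/-- Partial derivative in `x`. -/
def pdx (f : ℝ × ℝ × ℝ → ℝ) (p : ℝ × ℝ × ℝ) : ℝ := fderiv ℝ f p ((1 : ℝ), (0 : ℝ), (0 : ℝ))

/-- Partial derivative in `y`. -/
def pdy (f : ℝ × ℝ × ℝ → ℝ) (p : ℝ × ℝ × ℝ) : ℝ := fderiv ℝ f p ((0 : ℝ), (1 : ℝ), (0 : ℝ))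

/-- Partial derivative in `z`. -/
def pdz (f : ℝ × ℝ × ℝ → ℝ) (p : ℝ × ℝ × ℝ) : ℝ := fderiv ℝ f p ((0 : ℝ), (0 : ℝ), (1 : ℝ))

/-- The curl of a vector field `ℝ³ → ℝ³` at a point. -/
def curl3 (f : ℝ × ℝ × ℝ → ℝ × ℝ × ℝ) (p : ℝ × ℝ × ℝ) : ℝ × ℝ × ℝ :=
  (pdy (fun q => (f q).2.2) p - pdz (fun q => (f q).2.1) p,
   pdz (fun q => (f q).1) p - pdx (fun q => (f q).2.2) p,
   pdx (fun q => (f q).2.1) p - pdy (fun q => (f q).1) p)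

/-- The generic element of `U^{(1),k}_{0,curl}(Ω∞)` determined by polynomials
`p₁, p₂ ∈ ℝ[x,y,z]` and `ρ ∈ ℝ[x,y]`:
`(1+z)^{−(k+1)}·(y(1−y)z·p₁, x(1−x)z·p₂, x(1−x)y(1−y)·ρ)`. -/
def U1curlFun (k : ℕ) (p₁ p₂ : MvPolynomial (Fin 3) ℝ) (ρ : MvPolynomial (Fin 2) ℝ) :
    ℝ × ℝ × ℝ → ℝ × ℝ × ℝ :=
  fun p =>
    ((p.2.1 * (1 - p.2.1) * p.2.2 * MvPolynomial.eval ![p.1, p.2.1, p.2.2] p₁) /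
        (1 + p.2.2) ^ (k + 1),
     (p.1 * (1 - p.1) * p.2.2 * MvPolynomial.eval ![p.1, p.2.1, p.2.2] p₂) /
        (1 + p.2.2) ^ (k + 1),
     (p.1 * (1 - p.1) * p.2.1 * (1 - p.2.1) * MvPolynomial.eval ![p.1, p.2.1] ρ) /
        (1 + p.2.2) ^ (k + 1))

/-- The degree constraints defining `U^{(1),k}_{0,curl}(Ω∞)`:
`p₁` has degree `≤ k−1` in `x`, `≤ k−2` in `y`, `≤ k−2` in `z`; `p₂` has degree `≤ k−2`
in `x`, `≤ k−1` in `y`, `≤ k−2` in `z`; `ρ ∈ Q^{k−2,k−2}[x,y]` (bounds taken in `ℤ`, so a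
negative bound forces the polynomial to vanish). -/
def U1curlBounds (k : ℕ) (p₁ p₂ : MvPolynomial (Fin 3) ℝ)
    (ρ : MvPolynomial (Fin 2) ℝ) : Prop :=
  (∀ d ∈ p₁.support,
    (d 0 : ℤ) ≤ (k : ℤ) - 1 ∧ (d 1 : ℤ) ≤ (k : ℤ) - 2 ∧ (d 2 : ℤ) ≤ (k : ℤ) - 2) ∧
  (∀ d ∈ p₂.support,
    (d 0 : ℤ) ≤ (k : ℤ) - 2 ∧ (d 1 : ℤ) ≤ (k : ℤ) - 1 ∧ (d 2 : ℤ) ≤ (k : ℤ) - 2) ∧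
  (∀ d ∈ ρ.support, (d 0 : ℤ) ≤ (k : ℤ) - 2 ∧ (d 1 : ℤ) ≤ (k : ℤ) - 2)

/-! ### Auxiliary lemmas -/

open Polynomial in
/-- A multivariate polynomial over `ℝ` vanishing on a product of infinite sets is zero. -/
lemma mv_eq_zero_aux : ∀ (n : ℕ) (S : Fin n → Set ℝ), (∀ i, (S i).Infinite) →
    ∀ (T : MvPolynomial (Fin n) ℝ),
    (∀ v : Fin n → ℝ, (∀ i, v i ∈ S i) → MvPolynomial.eval v T = 0) → T = 0 := by
  intro n
  induction n with
  | zero =>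
      intro S hS T h
      obtain ⟨a, rfl⟩ := MvPolynomial.C_surjective (Fin 0) T
      have := h (fun i => (0:ℝ)) (fun i => i.elim0)
      simp only [MvPolynomial.eval_C] at this
      rw [this, map_zero]
  | succ n ih =>
      intro S hS T h
      have key : ∀ m, (MvPolynomial.finSuccEquiv ℝ n T).coeff m = 0 := by
        intro m
        apply ih (fun i => S i.succ) (fun i => hS i.succ)
        intro v hv
        have h1 : (Polynomial.map (MvPolynomial.eval v) (MvPolynomial.finSuccEquiv ℝ n T)) = 0 := by
          apply Polynomial.eq_zero_of_infinite_isRoot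
          apply Set.Infinite.mono _ (hS 0)
          intro x hx
          show Polynomial.IsRoot _ x
          rw [Polynomial.IsRoot, ← MvPolynomial.eval_eq_eval_mv_eval']
          exact h (Fin.cons x v) (fun i => i.cases hx hv)
        have := congrArg (fun q => Polynomial.coeff q m) h1
        simpa using this
      have h2 : MvPolynomial.finSuccEquiv ℝ n T = 0 := Polynomial.ext fun m => by
        simp [key m]
      have := (MvPolynomial.finSuccEquiv ℝ n).injective (a₂ := 0) (by simpa using h2)
      simpa using this

lemma mv3_eq_zero (T : MvPolynomial (Fin 3) ℝ)
    (h : ∀ x ∈ Set.Ioo (0:ℝ) 1, ∀ y ∈ Set.Ioo (0:ℝ) 1, ∀ z ∈ Set.Ioi (0:ℝ),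
      MvPolynomial.eval ![x, y, z] T = 0) : T = 0 := by
  apply mv_eq_zero_aux 3 ![Set.Ioo (0:ℝ) 1, Set.Ioo (0:ℝ) 1, Set.Ioi (0:ℝ)]
  · intro i
    fin_cases i
    · exact Set.Ioo_infinite (by norm_num : (0:ℝ) < 1)
    · exact Set.Ioo_infinite (by norm_num : (0:ℝ) < 1)
    · exact Set.Ioi_infinite (0:ℝ)
  · intro v hv
    have hv' : ![v 0, v 1, v 2] = v := by
      funext i; fin_cases i <;> rfl
    rw [← hv']
    exact h (v 0) (hv 0) (v 1) (hv 1) (v 2) (hv 2)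

lemma mv2_eq_zero (T : MvPolynomial (Fin 2) ℝ)
    (h : ∀ x ∈ Set.Ioo (0:ℝ) 1, ∀ y ∈ Set.Ioo (0:ℝ) 1,
      MvPolynomial.eval ![x, y] T = 0) : T = 0 := by
  apply mv_eq_zero_aux 2 ![Set.Ioo (0:ℝ) 1, Set.Ioo (0:ℝ) 1]
  · intro i
    fin_cases i
    · exact Set.Ioo_infinite (by norm_num : (0:ℝ) < 1)
    · exact Set.Ioo_infinite (by norm_num : (0:ℝ) < 1)
  · intro v hv
    have hv' : ![v 0, v 1] = v := by
      funext i; fin_cases i <;> rfl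
    rw [← hv']
    exact h (v 0) (hv 0) (v 1) (hv 1)

/-- evaluation commutes with `aeval` into `Polynomial`. -/
lemma eval_aeval_poly {n : ℕ} (g : Fin n → Polynomial ℝ) (q : MvPolynomial (Fin n) ℝ) (t : ℝ) :
    Polynomial.eval t (MvPolynomial.aeval g q) =
      MvPolynomial.eval (fun i => Polynomial.eval t (g i)) q := by
  induction q using MvPolynomial.induction_on with
  | C a => simp
  | add p q hp hq => simp [hp, hq]
  | mul_X p i hp => simp [hp]

lemma eval_aeval3 (x y t : ℝ) (q : MvPolynomial (Fin 3) ℝ) :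
    Polynomial.eval t (MvPolynomial.aeval ![Polynomial.C x, Polynomial.C y, Polynomial.X] q)
      = MvPolynomial.eval ![x, y, t] q := by
  rw [eval_aeval_poly]
  rw [show (fun i => Polynomial.eval t (![Polynomial.C x, Polynomial.C y, Polynomial.X] i))
      = ![x, y, t] from by funext i; fin_cases i <;> simp]

lemma eval_aeval2x (y t : ℝ) (q : MvPolynomial (Fin 2) ℝ) :
    Polynomial.eval t (MvPolynomial.aeval ![Polynomial.X, Polynomial.C y] q)
      = MvPolynomial.eval ![t, y] q := by
  rw [eval_aeval_poly]
  rw [show (fun i => Polynomial.eval t (![Polynomial.X, Polynomial.C y] i))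
      = ![t, y] from by funext i; fin_cases i <;> simp]

lemma eval_aeval2y (x t : ℝ) (q : MvPolynomial (Fin 2) ℝ) :
    Polynomial.eval t (MvPolynomial.aeval ![Polynomial.C x, Polynomial.X] q)
      = MvPolynomial.eval ![x, t] q := by
  rw [eval_aeval_poly]
  rw [show (fun i => Polynomial.eval t (![Polynomial.C x, Polynomial.X] i))
      = ![x, t] from by funext i; fin_cases i <;> simp]

/-- differentiability of mv polynomial eval along differentiable coordinates. -/
lemma diff_mv_eval {n : ℕ} (q : MvPolynomial (Fin n) ℝ) (g : (ℝ × ℝ × ℝ) → Fin n → ℝ)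
    (hg : ∀ i, Differentiable ℝ (fun w => g w i)) :
    Differentiable ℝ (fun w => MvPolynomial.eval (g w) q) := by
  induction q using MvPolynomial.induction_on with
  | C a => simpa using differentiable_const a
  | add p q hp hq => simpa using hp.fun_add hq
  | mul_X p i hp =>
      simp only [MvPolynomial.eval_mul, MvPolynomial.eval_X]
      exact hp.mul (hg i)

lemma diff_eval3 (q : MvPolynomial (Fin 3) ℝ) :
    Differentiable ℝ (fun w : ℝ × ℝ × ℝ => MvPolynomial.eval ![w.1, w.2.1, w.2.2] q) := by
  apply diff_mv_eval
  intro i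
  fin_cases i
  · simpa using differentiable_fst
  · simpa using differentiable_snd.fst
  · simpa using differentiable_snd.snd

lemma diff_eval2 (q : MvPolynomial (Fin 2) ℝ) :
    Differentiable ℝ (fun w : ℝ × ℝ × ℝ => MvPolynomial.eval ![w.1, w.2.1] q) := by
  apply diff_mv_eval
  intro i
  fin_cases i
  · simpa using differentiable_fst
  · simpa using differentiable_snd.fst

/-- natDegree bound for partial evaluation in the third variable. -/
lemma natDegree_aeval3_le (x y : ℝ) (q : MvPolynomial (Fin 3) ℝ) (n : ℕ)
    (h : ∀ d ∈ q.support, d 2 ≤ n) :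
    (MvPolynomial.aeval ![Polynomial.C x, Polynomial.C y, Polynomial.X] q).natDegree ≤ n := by
  conv_lhs => rw [q.as_sum]
  rw [map_sum]
  apply Polynomial.natDegree_sum_le_of_forall_le
  intro d hd
  rw [MvPolynomial.aeval_monomial]
  have hprod : (d.prod fun i e =>
      (![Polynomial.C x, Polynomial.C y, Polynomial.X] : Fin 3 → Polynomial ℝ) i ^ e)
      = Polynomial.C x ^ d 0 * Polynomial.C y ^ d 1 * Polynomial.X ^ d 2 := by
    rw [Finsupp.prod_fintype]
    · rw [Fin.prod_univ_three]
      rfl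
    · intro i; exact pow_zero _
  rw [hprod]
  refine le_trans (Polynomial.natDegree_mul_le) ?_
  have h1 : (Polynomial.C x ^ d 0 * Polynomial.C y ^ d 1 * Polynomial.X ^ d 2).natDegree ≤ n := by
    refine le_trans (Polynomial.natDegree_mul_le) ?_
    have : (Polynomial.C x ^ d 0 * Polynomial.C y ^ d 1).natDegree ≤ 0 := by
      refine le_trans (Polynomial.natDegree_mul_le) ?_
      simp [Polynomial.natDegree_pow]
    have h2 : (Polynomial.X ^ d 2 : Polynomial ℝ).natDegree ≤ n :=
      le_trans (Polynomial.natDegree_X_pow_le _) (h d hd)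
    omega
  have h0 : ((algebraMap ℝ (Polynomial ℝ)) (MvPolynomial.coeff d q)).natDegree = 0 := by
    simp [Polynomial.natDegree_C]
  omega

open Polynomial in
/-- The coefficient recursion: a polynomial solution of
`(1+X)G' = (k+1)G + c(1+X)` with `deg G ≤ k` and `G(0) = 0` is trivial. -/
lemma polyODE (k : ℕ) (G : Polynomial ℝ) (c : ℝ) (hdeg : G.natDegree ≤ k)
    (h0 : G.coeff 0 = 0)
    (heq : (1 + X) * derivative G = C ((k : ℝ) + 1) * G + C c * (1 + X)) :
    G = 0 ∧ c = 0 := by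
  have hco : ∀ n : ℕ, ((1 + X) * derivative G).coeff n =
      (C ((k : ℝ) + 1) * G + C c * (1 + X)).coeff n := fun n => by rw [heq]
  have hrec0 : G.coeff 1 = c := by
    have := hco 0
    simp only [mul_coeff_zero, coeff_add, coeff_one, coeff_X_zero, coeff_C_mul,
      coeff_derivative, h0] at this
    simpa using this
  have hrecn : ∀ n : ℕ, G.coeff (n + 2) * ((n : ℝ) + 2) + G.coeff (n + 1) * ((n : ℝ) + 1)
      = ((k : ℝ) + 1) * G.coeff (n + 1) + c * (if n = 0 then 1 else 0) := by
    intro n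
    have := hco (n + 1)
    have e1 : (1 + X) * derivative G = derivative G + X * derivative G := by ring
    rw [e1] at this
    simp only [coeff_add, coeff_X_mul, coeff_derivative, coeff_C_mul, coeff_one, coeff_X] at this
    have e2 : ((1 : Polynomial ℝ) + X).coeff (n+1) = (if n = 0 then 1 else 0) := by
      simp only [coeff_add, coeff_one, coeff_X]
      rcases n with _ | n
      · norm_num
      · have h1 : ¬ (n + 1 + 1 = 0) := by omega
        have h2 : ¬ (n + 1 + 1 = 1) := by omega
        have h3 : ¬ (1 = n + 1 + 1) := by omega
        have h4 : ¬ (n + 1 = 0) := by omega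
        simp [h1, h2, h3, h4]
    push_cast at this ⊢
    linarith [this]
  have hz : ∀ d m : ℕ, k + 1 ≤ m + 2 + d → G.coeff (m + 2) = 0 := by
    intro d
    induction d with
    | zero =>
        intro m hm
        exact coeff_eq_zero_of_natDegree_lt (lt_of_le_of_lt hdeg (by omega))
    | succ d ih =>
        intro m hm
        by_cases hc : k + 1 ≤ m + 2 + d
        · exact ih m hc
        · have hlt : m + 2 + d ≤ k := by omega
          have h3 : G.coeff (m + 3) = 0 := ih (m + 1) (by omega)
          have := hrecn (m + 1)
          rw [if_neg (by omega)] at this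
          have h4 : G.coeff (m + 1 + 2) = G.coeff (m + 3) := by norm_num
          rw [h4, h3] at this
          have hfac : ((k : ℝ) + 1) - ((m : ℝ) + 1 + 1) ≠ 0 := by
            have : (m : ℝ) + 2 ≤ (k : ℝ) := by exact_mod_cast (by omega : m + 2 ≤ k)
            intro hx
            nlinarith
          have hmul : G.coeff (m + 1 + 1) * (((m : ℝ) + 1 + 1) - ((k:ℝ)+1)) = 0 := by
            push_cast at this; linear_combination this
          rcases mul_eq_zero.mp hmul with h | h
          · simpa using h
          · exfalso; apply hfac; linarith [h]
  have h2z : G.coeff 2 = 0 := hz (k + 1) 0 (by omega)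
  have hc0 : c = 0 := by
    have := hrecn 0
    rw [if_pos rfl] at this
    simp only [h2z, hrec0] at this
    have hk1 : ((k:ℝ) + 1) ≠ 0 := by positivity
    have hmul : ((k:ℝ) + 1) * c = 0 := by push_cast at this; linarith
    rcases mul_eq_zero.mp hmul with h | h
    · exact absurd h hk1
    · exact h
  have hG : G = 0 := by
    ext n
    rcases n with _ | n
    · simpa using h0
    rcases n with _ | n
    · simpa using hrec0.trans hc0
    · simpa using hz (k + 1) n (by omega)
  exact ⟨hG, hc0⟩

open Polynomial in
lemma vanish_on_Ioi (P : Polynomial ℝ) (h : ∀ z ∈ Set.Ioi (0 : ℝ), Polynomial.eval z P = 0) :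
    P = 0 := by
  apply Polynomial.eq_zero_of_infinite_isRoot
  apply Set.Infinite.mono _ (Set.Ioi_infinite (0 : ℝ))
  intro z hz
  exact h z hz

open Polynomial in
lemma ode_from_pointwise (k : ℕ) (hk : 1 ≤ k) (a c : ℝ) (ha : a ≠ 0) (Q : Polynomial ℝ)
    (hQdeg : Q.natDegree ≤ k - 1)
    (h : ∀ z ∈ Set.Ioi (0 : ℝ),
      Polynomial.eval z ((1 + X) * derivative (C a * (X * Q)))
        = ((k : ℝ) + 1) * Polynomial.eval z (C a * (X * Q)) + c * (1 + z)) :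
    Q = 0 ∧ c = 0 := by
  set N := C a * (X * Q) with hN
  have hP : (1 + X) * derivative N - C ((k : ℝ) + 1) * N - C c * (1 + X) = 0 := by
    apply vanish_on_Ioi
    intro z hz
    have h1 := h z hz
    simp only [eval_sub, eval_mul, eval_add, eval_one, eval_X, eval_C] at h1 ⊢
    linarith
  have heq : (1 + X) * derivative N = C ((k : ℝ) + 1) * N + C c * (1 + X) := by
    linear_combination hP
  have hdeg : N.natDegree ≤ k := by
    rw [hN]
    have h1 := Polynomial.natDegree_mul_le (p := C a) (q := X * Q)
    have h2 := Polynomial.natDegree_mul_le (p := (X : Polynomial ℝ)) (q := Q)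
    simp only [Polynomial.natDegree_C, Polynomial.natDegree_X] at h1 h2
    omega
  have h0 : N.coeff 0 = 0 := by
    simp [hN, Polynomial.mul_coeff_zero, Polynomial.coeff_X_zero]
  obtain ⟨hN0, hc⟩ := polyODE k N c hdeg h0 heq
  refine ⟨?_, hc⟩
  have h1 : (X : Polynomial ℝ) * Q = 0 :=
    (mul_eq_zero.mp hN0).resolve_left (Polynomial.C_ne_zero.mpr ha)
  exact (mul_eq_zero.mp h1).resolve_left Polynomial.X_ne_zero

open Polynomial in
lemma rho_from_sigma (P : Polynomial ℝ)
    (h : ∀ x ∈ Set.Ioo (0 : ℝ) 1, Polynomial.eval x (derivative (X * (1 - X) * P)) = 0) :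
    P = 0 := by
  set S := X * (1 - X) * P with hSdef
  have hd : derivative S = 0 := by
    apply Polynomial.eq_zero_of_infinite_isRoot
    apply Set.Infinite.mono _ (Set.Ioo_infinite (by norm_num : (0:ℝ) < 1))
    intro x hx
    exact h x hx
  have hS : S = C (S.coeff 0) := Polynomial.eq_C_of_derivative_eq_zero hd
  have h0 : S.coeff 0 = 0 := by
    simp [hSdef, Polynomial.mul_coeff_zero, Polynomial.coeff_X_zero]
  have hS0 : S = 0 := by rw [hS, h0, map_zero]
  have hX1 : ((X : Polynomial ℝ) * (1 - X)) ≠ 0 := by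
    intro hcon
    have := congrArg (Polynomial.eval (1/2 : ℝ)) hcon
    norm_num at this
  exact (mul_eq_zero.mp hS0).resolve_left hX1

lemma pd_line_z (f : ℝ × ℝ × ℝ → ℝ) (v : ℝ × ℝ × ℝ) (hf : DifferentiableAt ℝ f v) (g' : ℝ)
    (hline : HasDerivAt (fun t => f (v.1, v.2.1, t)) g' v.2.2) : pdz f v = g' := by
  have hl : HasDerivAt (fun t : ℝ => ((v.1, v.2.1, t) : ℝ × ℝ × ℝ))
      (((0 : ℝ), (0 : ℝ), (1 : ℝ))) v.2.2 :=
    (hasDerivAt_const _ _).prodMk ((hasDerivAt_const _ _).prodMk (hasDerivAt_id _))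
  have h2 : HasDerivAt (fun t => f (v.1, v.2.1, t))
      (fderiv ℝ f v ((0 : ℝ), (0 : ℝ), (1 : ℝ))) v.2.2 :=
    hf.hasFDerivAt.comp_hasDerivAt v.2.2 hl
  exact (hline.unique h2).symm

lemma pd_line_x (f : ℝ × ℝ × ℝ → ℝ) (v : ℝ × ℝ × ℝ) (hf : DifferentiableAt ℝ f v) (g' : ℝ)
    (hline : HasDerivAt (fun t => f (t, v.2.1, v.2.2)) g' v.1) : pdx f v = g' := by
  have hl : HasDerivAt (fun t : ℝ => ((t, v.2.1, v.2.2) : ℝ × ℝ × ℝ))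
      (((1 : ℝ), (0 : ℝ), (0 : ℝ))) v.1 :=
    (hasDerivAt_id _).prodMk ((hasDerivAt_const _ _).prodMk (hasDerivAt_const _ _))
  have h2 : HasDerivAt (fun t => f (t, v.2.1, v.2.2))
      (fderiv ℝ f v ((1 : ℝ), (0 : ℝ), (0 : ℝ))) v.1 :=
    hf.hasFDerivAt.comp_hasDerivAt v.1 hl
  exact (hline.unique h2).symm

lemma pd_line_y (f : ℝ × ℝ × ℝ → ℝ) (v : ℝ × ℝ × ℝ) (hf : DifferentiableAt ℝ f v) (g' : ℝ)
    (hline : HasDerivAt (fun t => f (v.1, t, v.2.2)) g' v.2.1) : pdy f v = g' := by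
  have hl : HasDerivAt (fun t : ℝ => ((v.1, t, v.2.2) : ℝ × ℝ × ℝ))
      (((0 : ℝ), (1 : ℝ), (0 : ℝ))) v.2.1 :=
    (hasDerivAt_const _ _).prodMk ((hasDerivAt_id _).prodMk (hasDerivAt_const _ _))
  have h2 : HasDerivAt (fun t => f (v.1, t, v.2.2))
      (fderiv ℝ f v ((0 : ℝ), (1 : ℝ), (0 : ℝ))) v.2.1 :=
    hf.hasFDerivAt.comp_hasDerivAt v.2.1 hl
  exact (hline.unique h2).symm

open Polynomial in
lemma hasDerivAt_ratio (k : ℕ) (N : Polynomial ℝ) (z : ℝ) (hne : (1 : ℝ) + z ≠ 0) :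
    HasDerivAt (fun t : ℝ => Polynomial.eval t N / (1 + t) ^ (k + 1))
      ((Polynomial.eval z (derivative N) * (1 + z) ^ (k + 1)
          - Polynomial.eval z N * (((k : ℝ) + 1) * (1 + z) ^ k)) / ((1 + z) ^ (k + 1)) ^ 2) z := by
  have hN := N.hasDerivAt z
  have hden : HasDerivAt (fun t : ℝ => (1 + t) ^ (k + 1)) (((k : ℝ) + 1) * (1 + z) ^ k) z := by
    have h1 : HasDerivAt (fun t : ℝ => 1 + t) 1 z := (hasDerivAt_id z).const_add 1
    have h2 := h1.fun_pow (k + 1)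
    refine h2.congr_deriv ?_
    push_cast
    simp [Nat.add_sub_cancel]
  exact hN.div hden (pow_ne_zero _ hne)

open Polynomial in
lemma pointwise_identity (k : ℕ) (N : Polynomial ℝ) (c z : ℝ) (hz : 0 < z)
    (h : (Polynomial.eval z (derivative N) * (1 + z) ^ (k + 1)
          - Polynomial.eval z N * (((k : ℝ) + 1) * (1 + z) ^ k)) / ((1 + z) ^ (k + 1)) ^ 2
        = c / (1 + z) ^ (k + 1)) :
    Polynomial.eval z ((1 + X) * derivative N)
      = ((k : ℝ) + 1) * Polynomial.eval z N + c * (1 + z) := by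
  have hne : (1 : ℝ) + z ≠ 0 := by linarith
  have hpk : ((1 : ℝ) + z) ^ k ≠ 0 := pow_ne_zero _ hne
  have hpow : ((1 : ℝ) + z) ^ (k + 1) ≠ 0 := pow_ne_zero _ hne
  have hpow2 : (((1 : ℝ) + z) ^ (k + 1)) ^ 2 ≠ 0 := pow_ne_zero _ hpow
  rw [div_eq_div_iff hpow2 hpow] at h
  have e : ((1 : ℝ) + z) ^ (k + 1) = (1 + z) ^ k * (1 + z) := pow_succ _ _
  rw [e] at h
  set P := ((1 : ℝ) + z) ^ k with hP
  simp only [eval_mul, eval_add, eval_one, eval_X]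
  have key : ((1 + z) * Polynomial.eval z (derivative N)
      - (((k : ℝ) + 1) * Polynomial.eval z N + c * (1 + z))) * (P * P * (1 + z)) = 0 := by
    linear_combination h
  rcases mul_eq_zero.mp key with h5 | h5
  · linarith
  · exact absurd h5 (mul_ne_zero (mul_ne_zero hpk hpk) hne)

/-! ### Main theorem -/

open Polynomial in
/-- the curl operator is injective on `U^{(1),k}_{0,curl}(Ω∞)`. -/
theorem curl_injective_on_U1curl (k : ℕ) (hk : 1 ≤ k)
    (p₁ p₂ : MvPolynomial (Fin 3) ℝ) (ρ : MvPolynomial (Fin 2) ℝ)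
    (hbounds : U1curlBounds k p₁ p₂ ρ)
    (hcurl : ∀ p ∈ PyrInfInt, curl3 (U1curlFun k p₁ p₂ ρ) p = 0) :
    p₁ = 0 ∧ p₂ = 0 ∧ ρ = 0 := by
  obtain ⟨hb1, hb2, hbρ⟩ := hbounds
  have hd1 : ∀ d ∈ p₁.support, d 2 ≤ k - 1 := by
    intro d hd; have := (hb1 d hd).2.2; omega
  have hd2 : ∀ d ∈ p₂.support, d 2 ≤ k - 1 := by
    intro d hd; have := (hb2 d hd).2.2; omega
  have key : ∀ x ∈ Set.Ioo (0:ℝ) 1, ∀ y ∈ Set.Ioo (0:ℝ) 1,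
      MvPolynomial.aeval ![Polynomial.C x, Polynomial.C y, Polynomial.X] p₁ = 0 ∧
      MvPolynomial.aeval ![Polynomial.C x, Polynomial.C y, Polynomial.X] p₂ = 0 ∧
      Polynomial.eval x (derivative
        (X * (1 - X) * MvPolynomial.aeval ![Polynomial.X, Polynomial.C y] ρ)) = 0 := by
    intro x hx y hy
    obtain ⟨hx0, hx1⟩ := hx
    obtain ⟨hy0, hy1⟩ := hy
    have hax : x * (1 - x) ≠ 0 := mul_ne_zero (ne_of_gt hx0) (by linarith)
    have hay : y * (1 - y) ≠ 0 := mul_ne_zero (ne_of_gt hy0) (by linarith)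
    set Q1 := MvPolynomial.aeval ![Polynomial.C x, Polynomial.C y, Polynomial.X] p₁ with hQ1
    set Q2 := MvPolynomial.aeval ![Polynomial.C x, Polynomial.C y, Polynomial.X] p₂ with hQ2
    set Pρx := MvPolynomial.aeval ![(Polynomial.X : Polynomial ℝ), Polynomial.C y] ρ with hPρx
    set Pρy := MvPolynomial.aeval ![Polynomial.C x, (Polynomial.X : Polynomial ℝ)] ρ with hPρy
    set N1 := C (y * (1 - y)) * (X * Q1) with hN1
    set N2 := C (x * (1 - x)) * (X * Q2) with hN2
    set M1 := C (y * (1 - y)) * (X * (1 - X) * Pρx) with hM1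
    set M2 := C (x * (1 - x)) * (X * (1 - X) * Pρy) with hM2
    have hnum1 : ∀ t : ℝ, Polynomial.eval t N1
        = y * (1 - y) * t * MvPolynomial.eval ![x, y, t] p₁ := by
      intro t
      rw [hN1, hQ1]
      simp only [eval_mul, eval_C, eval_X, eval_aeval3]
      ring
    have hnum2 : ∀ t : ℝ, Polynomial.eval t N2
        = x * (1 - x) * t * MvPolynomial.eval ![x, y, t] p₂ := by
      intro t
      rw [hN2, hQ2]
      simp only [eval_mul, eval_C, eval_X, eval_aeval3]
      ring
    have hnum3 : ∀ t : ℝ, Polynomial.eval t M1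
        = t * (1 - t) * y * (1 - y) * MvPolynomial.eval ![t, y] ρ := by
      intro t
      rw [hM1, hPρx]
      simp only [eval_mul, eval_sub, eval_one, eval_C, eval_X, eval_aeval2x]
      ring
    have hnum4 : ∀ t : ℝ, Polynomial.eval t M2
        = x * (1 - x) * t * (1 - t) * MvPolynomial.eval ![x, t] ρ := by
      intro t
      rw [hM2, hPρy]
      simp only [eval_mul, eval_sub, eval_one, eval_C, eval_X, eval_aeval2y]
      ring
    -- pointwise identities from the curl hypothesis
    have hpt1 : ∀ z ∈ Set.Ioi (0:ℝ),
        Polynomial.eval z ((1 + X) * derivative N1)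
          = ((k : ℝ) + 1) * Polynomial.eval z N1
            + Polynomial.eval x (derivative M1) * (1 + z) := by
      intro z hz
      have hz0 : (0:ℝ) < z := hz
      have hne : (1:ℝ) + z ≠ 0 := by linarith
      have hcv := hcurl (x, y, z) ⟨hx0, hx1, hy0, hy1, hz0⟩
      have e2 : pdz (fun q => (U1curlFun k p₁ p₂ ρ q).1) (x, y, z)
          - pdx (fun q => (U1curlFun k p₁ p₂ ρ q).2.2) (x, y, z) = 0 := by
        have := congrArg (fun w : ℝ × ℝ × ℝ => w.2.1) hcv
        simpa [curl3] using this
      have hdiff1 : DifferentiableAt ℝ (fun w : ℝ × ℝ × ℝ =>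
          (w.2.1 * (1 - w.2.1) * w.2.2 * MvPolynomial.eval ![w.1, w.2.1, w.2.2] p₁) /
            (1 + w.2.2) ^ (k + 1)) (x, y, z) := by
        simp only [div_eq_mul_inv]
        exact ((((differentiable_snd.fst).mul
            ((differentiable_const (1:ℝ)).sub differentiable_snd.fst)).mul
            differentiable_snd.snd).mul (diff_eval3 p₁)).differentiableAt.mul
          (((((differentiable_const (1:ℝ)).add differentiable_snd.snd).pow
            (k + 1)).differentiableAt).inv (pow_ne_zero _ hne))
      have hdiff3 : DifferentiableAt ℝ (fun w : ℝ × ℝ × ℝ =>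
          (w.1 * (1 - w.1) * w.2.1 * (1 - w.2.1) * MvPolynomial.eval ![w.1, w.2.1] ρ) /
            (1 + w.2.2) ^ (k + 1)) (x, y, z) := by
        simp only [div_eq_mul_inv]
        exact (((((differentiable_fst).mul
            ((differentiable_const (1:ℝ)).sub differentiable_fst)).mul
            (differentiable_snd.fst)).mul
            ((differentiable_const (1:ℝ)).sub differentiable_snd.fst)).mul
            (diff_eval2 ρ)).differentiableAt.mul
          (((((differentiable_const (1:ℝ)).add differentiable_snd.snd).pow
            (k + 1)).differentiableAt).inv (pow_ne_zero _ hne))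
      have hline1 : HasDerivAt (fun t => (U1curlFun k p₁ p₂ ρ (x, y, t)).1)
          ((Polynomial.eval z (derivative N1) * (1 + z) ^ (k + 1)
            - Polynomial.eval z N1 * (((k : ℝ) + 1) * (1 + z) ^ k)) / ((1 + z) ^ (k + 1)) ^ 2)
          z := by
        refine (hasDerivAt_ratio k N1 z hne).congr_of_eventuallyEq
          (Filter.Eventually.of_forall fun t => ?_)
        show (U1curlFun k p₁ p₂ ρ (x, y, t)).1 = Polynomial.eval t N1 / (1 + t) ^ (k + 1)
        simp only [U1curlFun]
        rw [hnum1 t]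
      have hline3 : HasDerivAt (fun t => (U1curlFun k p₁ p₂ ρ (t, y, z)).2.2)
          (Polynomial.eval x (derivative M1) / (1 + z) ^ (k + 1)) x := by
        refine HasDerivAt.congr_of_eventuallyEq
          ((M1.hasDerivAt x).div_const ((1 + z) ^ (k + 1)))
          (Filter.Eventually.of_forall fun t => ?_)
        show (U1curlFun k p₁ p₂ ρ (t, y, z)).2.2 = Polynomial.eval t M1 / (1 + z) ^ (k + 1)
        simp only [U1curlFun]
        rw [hnum3 t]
      have hpdz1 : pdz (fun q => (U1curlFun k p₁ p₂ ρ q).1) (x, y, z)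
          = (Polynomial.eval z (derivative N1) * (1 + z) ^ (k + 1)
            - Polynomial.eval z N1 * (((k : ℝ) + 1) * (1 + z) ^ k)) / ((1 + z) ^ (k + 1)) ^ 2 :=
        pd_line_z _ (x, y, z) hdiff1 _ hline1
      have hpdx3 : pdx (fun q => (U1curlFun k p₁ p₂ ρ q).2.2) (x, y, z)
          = Polynomial.eval x (derivative M1) / (1 + z) ^ (k + 1) :=
        pd_line_x _ (x, y, z) hdiff3 _ hline3
      have heq2 : (Polynomial.eval z (derivative N1) * (1 + z) ^ (k + 1)
            - Polynomial.eval z N1 * (((k : ℝ) + 1) * (1 + z) ^ k)) / ((1 + z) ^ (k + 1)) ^ 2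
          = Polynomial.eval x (derivative M1) / (1 + z) ^ (k + 1) := by
        rw [← hpdz1, ← hpdx3]
        linarith [e2]
      exact pointwise_identity k N1 _ z hz0 heq2
    have hpt2 : ∀ z ∈ Set.Ioi (0:ℝ),
        Polynomial.eval z ((1 + X) * derivative N2)
          = ((k : ℝ) + 1) * Polynomial.eval z N2
            + Polynomial.eval y (derivative M2) * (1 + z) := by
      intro z hz
      have hz0 : (0:ℝ) < z := hz
      have hne : (1:ℝ) + z ≠ 0 := by linarith
      have hcv := hcurl (x, y, z) ⟨hx0, hx1, hy0, hy1, hz0⟩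
      have e1 : pdy (fun q => (U1curlFun k p₁ p₂ ρ q).2.2) (x, y, z)
          - pdz (fun q => (U1curlFun k p₁ p₂ ρ q).2.1) (x, y, z) = 0 := by
        have := congrArg (fun w : ℝ × ℝ × ℝ => w.1) hcv
        simpa [curl3] using this
      have hdiff2 : DifferentiableAt ℝ (fun w : ℝ × ℝ × ℝ =>
          (w.1 * (1 - w.1) * w.2.2 * MvPolynomial.eval ![w.1, w.2.1, w.2.2] p₂) /
            (1 + w.2.2) ^ (k + 1)) (x, y, z) := by
        simp only [div_eq_mul_inv]
        exact ((((differentiable_fst).mul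
            ((differentiable_const (1:ℝ)).sub differentiable_fst)).mul
            differentiable_snd.snd).mul (diff_eval3 p₂)).differentiableAt.mul
          (((((differentiable_const (1:ℝ)).add differentiable_snd.snd).pow
            (k + 1)).differentiableAt).inv (pow_ne_zero _ hne))
      have hdiff3 : DifferentiableAt ℝ (fun w : ℝ × ℝ × ℝ =>
          (w.1 * (1 - w.1) * w.2.1 * (1 - w.2.1) * MvPolynomial.eval ![w.1, w.2.1] ρ) /
            (1 + w.2.2) ^ (k + 1)) (x, y, z) := by
        simp only [div_eq_mul_inv]
        exact (((((differentiable_fst).mul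
            ((differentiable_const (1:ℝ)).sub differentiable_fst)).mul
            (differentiable_snd.fst)).mul
            ((differentiable_const (1:ℝ)).sub differentiable_snd.fst)).mul
            (diff_eval2 ρ)).differentiableAt.mul
          (((((differentiable_const (1:ℝ)).add differentiable_snd.snd).pow
            (k + 1)).differentiableAt).inv (pow_ne_zero _ hne))
      have hline2 : HasDerivAt (fun t => (U1curlFun k p₁ p₂ ρ (x, y, t)).2.1)
          ((Polynomial.eval z (derivative N2) * (1 + z) ^ (k + 1)
            - Polynomial.eval z N2 * (((k : ℝ) + 1) * (1 + z) ^ k)) / ((1 + z) ^ (k + 1)) ^ 2)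
          z := by
        refine (hasDerivAt_ratio k N2 z hne).congr_of_eventuallyEq
          (Filter.Eventually.of_forall fun t => ?_)
        show (U1curlFun k p₁ p₂ ρ (x, y, t)).2.1 = Polynomial.eval t N2 / (1 + t) ^ (k + 1)
        simp only [U1curlFun]
        rw [hnum2 t]
      have hline3 : HasDerivAt (fun t => (U1curlFun k p₁ p₂ ρ (x, t, z)).2.2)
          (Polynomial.eval y (derivative M2) / (1 + z) ^ (k + 1)) y := by
        refine HasDerivAt.congr_of_eventuallyEq
          ((M2.hasDerivAt y).div_const ((1 + z) ^ (k + 1)))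
          (Filter.Eventually.of_forall fun t => ?_)
        show (U1curlFun k p₁ p₂ ρ (x, t, z)).2.2 = Polynomial.eval t M2 / (1 + z) ^ (k + 1)
        simp only [U1curlFun]
        rw [hnum4 t]
      have hpdz2 : pdz (fun q => (U1curlFun k p₁ p₂ ρ q).2.1) (x, y, z)
          = (Polynomial.eval z (derivative N2) * (1 + z) ^ (k + 1)
            - Polynomial.eval z N2 * (((k : ℝ) + 1) * (1 + z) ^ k)) / ((1 + z) ^ (k + 1)) ^ 2 :=
        pd_line_z _ (x, y, z) hdiff2 _ hline2
      have hpdy3 : pdy (fun q => (U1curlFun k p₁ p₂ ρ q).2.2) (x, y, z)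
          = Polynomial.eval y (derivative M2) / (1 + z) ^ (k + 1) :=
        pd_line_y _ (x, y, z) hdiff3 _ hline3
      have heq1 : (Polynomial.eval z (derivative N2) * (1 + z) ^ (k + 1)
            - Polynomial.eval z N2 * (((k : ℝ) + 1) * (1 + z) ^ k)) / ((1 + z) ^ (k + 1)) ^ 2
          = Polynomial.eval y (derivative M2) / (1 + z) ^ (k + 1) := by
        rw [← hpdz2, ← hpdy3]
        linarith [e1]
      exact pointwise_identity k N2 _ z hz0 heq1
    obtain ⟨hQ1z, hc1⟩ := ode_from_pointwise k hk (y * (1 - y)) _ hay Q1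
      (natDegree_aeval3_le x y p₁ (k - 1) hd1) hpt1
    obtain ⟨hQ2z, hc2⟩ := ode_from_pointwise k hk (x * (1 - x)) _ hax Q2
      (natDegree_aeval3_le x y p₂ (k - 1) hd2) hpt2
    refine ⟨hQ1z, hQ2z, ?_⟩
    have hder : derivative M1 = C (y * (1 - y)) * derivative (X * (1 - X) * Pρx) := by
      rw [hM1]; exact Polynomial.derivative_C_mul _ _
    rw [hder, eval_mul, eval_C] at hc1
    rcases mul_eq_zero.mp hc1 with h | h
    · exact absurd h hay
    · exact h
  -- conclude
  have hp1 : p₁ = 0 := by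
    apply mv3_eq_zero
    intro x hx y hy z hz
    have hQ := (key x hx y hy).1
    rw [← eval_aeval3 x y z p₁, hQ, Polynomial.eval_zero]
  have hp2 : p₂ = 0 := by
    apply mv3_eq_zero
    intro x hx y hy z hz
    have hQ := (key x hx y hy).2.1
    rw [← eval_aeval3 x y z p₂, hQ, Polynomial.eval_zero]
  have hρ : ρ = 0 := by
    apply mv2_eq_zero
    intro x hx y hy
    have hP : MvPolynomial.aeval ![(Polynomial.X : Polynomial ℝ), Polynomial.C y] ρ = 0 :=
      rho_from_sigma _ (fun x' hx' => (key x' hx' y hy).2.2)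
    rw [← eval_aeval2x y x ρ, hP, Polynomial.eval_zero]
  exact ⟨hp1, hp2, hρ⟩

end
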